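/- Let Z = BvN(a, b; ρ) be the standard bivariate normal CDF. Then for fixed a, b, the function ρ ↦ BvN(a,b;ρ) is monotonically nondecreasing in ρ on (−1,1), with ∂BvN(a,b;ρ)/∂ρ = φ₂(a,b;ρ), the standard bivariate normal density at (a,b) with correlation ρ (Plackett's identity). -/

import Mathlib

open MeasureTheory Real

/-- Standard normal density. -/
noncomputable def stdPdf (x : ℝ) : ℝ := (Real.sqrt (2 * Real.pi))⁻¹ * Real.exp (-x ^ 2 / 2)

/-- Standard normal CDF. -/
noncomputable def stdCdf (t : ℝ) : ℝ := ∫ s in Set.Iic t, stdPdf s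

/-- Owen's T function. -/
noncomputable def owenT (h a : ℝ) : ℝ :=
  (2 * Real.pi)⁻¹ * ∫ x in (0:ℝ)..a, Real.exp (-h ^ 2 * (1 + x ^ 2) / 2) / (1 + x ^ 2)

/-- Standard bivariate normal density with correlation ρ. -/
noncomputable def bvnPdf (ρ x y : ℝ) : ℝ :=
  Real.exp (-(x ^ 2 - 2 * ρ * x * y + y ^ 2) / (2 * (1 - ρ ^ 2))) /
    (2 * Real.pi * Real.sqrt (1 - ρ ^ 2))

/-- Standard bivariate normal CDF with correlation ρ. -/
noncomputable def bvn (u v ρ : ℝ) : ℝ :=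
  ∫ p : ℝ × ℝ in Set.Iic u ×ˢ Set.Iic v, bvnPdf ρ p.1 p.2

/-- General bivariate Gaussian density with means μ₁ μ₂, std devs σ₁ σ₂, covariance σ₁₂. -/
noncomputable def biGaussPdf (μ₁ μ₂ σ₁ σ₂ σ₁₂ x y : ℝ) : ℝ :=
  Real.exp (-(σ₂ ^ 2 * (x - μ₁) ^ 2 - 2 * σ₁₂ * (x - μ₁) * (y - μ₂) + σ₁ ^ 2 * (y - μ₂) ^ 2) /
      (2 * (σ₁ ^ 2 * σ₂ ^ 2 - σ₁₂ ^ 2))) /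
    (2 * Real.pi * Real.sqrt (σ₁ ^ 2 * σ₂ ^ 2 - σ₁₂ ^ 2))

open Filter Set Topology

noncomputable def bvnD (r x y : ℝ) : ℝ :=
  bvnPdf r x y * (((r*x - y)*(r*y - x) + r*(1 - r^2)) / (1 - r^2)^2)


lemma one_sub_sq_pos {r : ℝ} (h : |r| < 1) : 0 < 1 - r^2 := by
  nlinarith [abs_nonneg r, sq_abs r]

lemma hasDerivAt_bvnPdf_x {r : ℝ} (h : |r| < 1) (x y : ℝ) :
    HasDerivAt (fun t => bvnPdf r t y) (bvnPdf r x y * ((r*y - x)/(1 - r^2))) x := by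
  have hpos := one_sub_sq_pos h
  have h0 : HasDerivAt (fun t : ℝ => -(t^2 - 2*r*t*y + y^2)) (2*r*y - 2*x) x := by
    have h1 : HasDerivAt (fun t : ℝ => t^2) (2*x) x := by simpa using hasDerivAt_pow 2 x
    have h2 : HasDerivAt (fun t : ℝ => 2*r*y*t) (2*r*y) x := by
      simpa using (hasDerivAt_id x).const_mul (2*r*y)
    have h3 := ((h1.sub h2).add_const (y^2)).neg
    have h4 : HasDerivAt (fun t : ℝ => -(t ^ 2 - 2*r*y*t + y ^ 2)) (2*r*y - 2*x) x := by
      exact h3.congr_deriv (by ring)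
    exact h4.congr_of_eventuallyEq (Filter.Eventually.of_forall fun t => by ring)
  have hA := h0.div_const (2*(1 - r^2))
  have hE := hA.exp
  have hF := hE.div_const (2*Real.pi*Real.sqrt (1 - r^2))
  refine hF.congr_deriv ?_
  unfold bvnPdf
  field_simp

lemma hasDerivAt_K_y {r : ℝ} (h : |r| < 1) (x y : ℝ) :
    HasDerivAt (fun t => bvnPdf r x t * ((r*t - x)/(1 - r^2))) (bvnD r x y) y := by
  have hpos := one_sub_sq_pos h
  -- derivative of exp part in t
  have h0 : HasDerivAt (fun t : ℝ => -(x^2 - 2*r*x*t + t^2)) (2*r*x - 2*y) y := by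
    have h1 : HasDerivAt (fun t : ℝ => t^2) (2*y) y := by simpa using hasDerivAt_pow 2 y
    have h2 : HasDerivAt (fun t : ℝ => 2*r*x*t) (2*r*x) y := by
      simpa using (hasDerivAt_id y).const_mul (2*r*x)
    have h3 : HasDerivAt (fun t : ℝ => -((-(2*r*x*t) + t^2) + x^2)) (2*r*x - 2*y) y := by
      exact ((h2.neg.add h1).add_const (x^2)).neg.congr_deriv (by ring)
    exact h3.congr_of_eventuallyEq (Filter.Eventually.of_forall fun t => by ring)
  have hA := h0.div_const (2*(1 - r^2))
  have hE := (hA.exp).div_const (2*Real.pi*Real.sqrt (1 - r^2))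
  have hL : HasDerivAt (fun t : ℝ => (r*t - x)/(1 - r^2)) (r/(1 - r^2)) y := by
    have h2 : HasDerivAt (fun t : ℝ => r*t) r y := by simpa using (hasDerivAt_id y).const_mul r
    exact (h2.sub_const x).div_const _
  have hF := hE.mul hL
  have hFn : HasDerivAt (fun t => bvnPdf r x t * ((r*t - x)/(1 - r^2)))
      (Real.exp (-(x ^ 2 - 2 * r * x * y + y ^ 2) / (2 * (1 - r ^ 2))) * ((2*r*x - 2*y) / (2 * (1 - r ^ 2))) /
          (2 * Real.pi * Real.sqrt (1 - r ^ 2)) * ((r * y - x) / (1 - r ^ 2)) +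
        Real.exp (-(x ^ 2 - 2 * r * x * y + y ^ 2) / (2 * (1 - r ^ 2))) /
          (2 * Real.pi * Real.sqrt (1 - r ^ 2)) * (r / (1 - r ^ 2))) y := by
    exact hF.congr_of_eventuallyEq (Filter.Eventually.of_forall fun t => by unfold bvnPdf; simp only [Pi.mul_apply])
  convert hFn using 1
  unfold bvnD bvnPdf
  field_simp


lemma hasDerivAt_bvnPdf_rho {r : ℝ} (h : |r| < 1) (x y : ℝ) :
    HasDerivAt (fun t => bvnPdf t x y) (bvnD r x y) r := by
  have hpos := one_sub_sq_pos h
  have hs : 0 < Real.sqrt (1 - r^2) := Real.sqrt_pos.2 hpos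
  have hs2 : Real.sqrt (1 - r^2) ^ 2 = 1 - r^2 := Real.sq_sqrt hpos.le
  have hd : HasDerivAt (fun t : ℝ => 1 - t^2) (-(2*r)) r := by
    simpa using ((hasDerivAt_pow 2 r).const_sub 1)
  -- numerator of exponent
  have hnum : HasDerivAt (fun t : ℝ => -(x^2 - 2*t*x*y + y^2)) (2*x*y) r := by
    have h2 : HasDerivAt (fun t : ℝ => 2*x*y*t) (2*x*y) r := by
      simpa using (hasDerivAt_id r).const_mul (2*x*y)
    have h3 : HasDerivAt (fun t : ℝ => -((x^2 - 2*x*y*t) + y^2)) (2*x*y) r := by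
      exact (((hasDerivAt_const r (x^2)).sub h2).add_const (y^2)).neg.congr_deriv (by ring)
    exact h3.congr_of_eventuallyEq (Filter.Eventually.of_forall fun t => by ring)
  have hden : HasDerivAt (fun t : ℝ => 2*(1 - t^2)) (2*(-(2*r))) r := hd.const_mul 2
  have hA := hnum.div hden (by positivity)
  have hE := hA.exp
  -- inverse of the sqrt factor
  have hg : HasDerivAt (fun t : ℝ => 2*Real.pi*Real.sqrt (1 - t^2))
      (2*Real.pi*((-(2*r))/(2*Real.sqrt (1 - r^2)))) r := (hd.sqrt hpos.ne').const_mul (2*Real.pi)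
  have hinv : HasDerivAt (fun t : ℝ => (2*Real.pi*Real.sqrt (1 - t^2))⁻¹)
      (r * (2*Real.pi*Real.sqrt (1 - r^2))⁻¹ / (1 - r^2)) r := by
    have := hg.inv (by positivity)
    refine this.congr_deriv ?_
    field_simp
    linear_combination (-r) * hs2
  have hF := hE.mul hinv
  have hFn : HasDerivAt (fun t => bvnPdf t x y)
    (Real.exp (-(x ^ 2 - 2 * r * x * y + y ^ 2) / (2 * (1 - r ^ 2))) *
        ((2*x*y * (2*(1 - r^2)) - -(x^2 - 2*r*x*y + y^2) * (2*(-(2*r)))) / (2*(1 - r^2))^2) *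
        (2 * Real.pi * Real.sqrt (1 - r ^ 2))⁻¹ +
      Real.exp (-(x ^ 2 - 2 * r * x * y + y ^ 2) / (2 * (1 - r ^ 2))) *
        (r * (2*Real.pi*Real.sqrt (1 - r^2))⁻¹ / (1 - r^2))) r := by
    exact hF.congr_of_eventuallyEq (Filter.Eventually.of_forall fun t => by
      simp [bvnPdf, div_eq_mul_inv])
  convert hFn using 1
  unfold bvnD bvnPdf
  field_simp
  ring


lemma bvnPdf_pos {r : ℝ} (h : |r| < 1) (x y : ℝ) : 0 < bvnPdf r x y := by
  have := one_sub_sq_pos h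
  unfold bvnPdf
  positivity

/-- exponential factor bound -/
lemma exp_factor_le {ρ₀ r : ℝ} (h1 : ρ₀ < 1) (hr : |r| ≤ ρ₀) (x y : ℝ) :
    Real.exp (-(x ^ 2 - 2 * r * x * y + y ^ 2) / (2 * (1 - r ^ 2))) ≤
      Real.exp (-((1-ρ₀)/2)*x^2) * Real.exp (-((1-ρ₀)/2)*y^2) := by
  have h0 : 0 ≤ ρ₀ := le_trans (abs_nonneg r) hr
  have habs := abs_le.mp hr
  have h2 : 0 < 1 - r^2 := one_sub_sq_pos (lt_of_le_of_lt hr h1)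
  rw [← Real.exp_add]
  apply Real.exp_le_exp.2
  have hQ : (1-ρ₀)*(x^2+y^2) ≤ x^2 - 2*r*x*y + y^2 := by
    nlinarith [mul_nonneg (sub_nonneg.2 habs.2) (sq_nonneg (x+y)),
      mul_nonneg (by linarith : (0:ℝ) ≤ ρ₀ + r) (sq_nonneg (x-y))]
  have hQ0 : 0 ≤ x^2 - 2*r*x*y + y^2 := le_trans (mul_nonneg (by linarith) (by positivity)) hQ
  have key : (x^2 - 2*r*x*y + y^2)/2 ≤ (x^2 - 2*r*x*y + y^2)/(2*(1-r^2)) := by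
    apply div_le_div_of_nonneg_left hQ0 (by positivity) (by nlinarith [sq_nonneg r])
  have key2 : (1-ρ₀)*(x^2+y^2)/2 ≤ (x^2 - 2*r*x*y + y^2)/(2*(1-r^2)) :=
    le_trans (by linarith) key
  have : -(x ^ 2 - 2 * r * x * y + y ^ 2) / (2 * (1 - r ^ 2))
      = -((x ^ 2 - 2 * r * x * y + y ^ 2) / (2 * (1 - r ^ 2))) := by ring
  rw [this]
  nlinarith [key2]

lemma sqrt_factor_le {ρ₀ r : ℝ} (h1 : ρ₀ < 1) (hr : |r| ≤ ρ₀) :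
    Real.sqrt (1 - ρ₀^2) ≤ Real.sqrt (1 - r^2) := by
  apply Real.sqrt_le_sqrt
  nlinarith [abs_nonneg r, sq_abs r, le_trans (abs_nonneg r) hr]

/-- bound on the bvn pdf -/
lemma bvnPdf_le {ρ₀ r : ℝ} (h1 : ρ₀ < 1) (hr : |r| ≤ ρ₀) (x y : ℝ) :
    bvnPdf r x y ≤ (2*Real.pi*Real.sqrt (1 - ρ₀^2))⁻¹ *
      (Real.exp (-((1-ρ₀)/2)*x^2) * Real.exp (-((1-ρ₀)/2)*y^2)) := by
  have h0 : 0 ≤ ρ₀ := le_trans (abs_nonneg r) hr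
  have hm : 0 < 1 - ρ₀^2 := by nlinarith
  have hs : 0 < Real.sqrt (1 - ρ₀^2) := Real.sqrt_pos.2 hm
  rw [inv_mul_eq_div]
  unfold bvnPdf
  apply div_le_div₀ (by positivity) (exp_factor_le h1 hr x y) (by positivity)
  have := sqrt_factor_le h1 hr
  nlinarith [Real.pi_pos]

/-- absorb a quadratic polynomial into the gaussian -/
lemma poly_absorb {c : ℝ} (hc : 0 < c) (t : ℝ) :
    (1 + 2*t^2) * Real.exp (-c*t^2) ≤ (1 + 4/c) * Real.exp (-(c/2)*t^2) := by
  have h1 : 1 + 2*t^2 ≤ (1 + 4/c) * Real.exp ((c/2)*t^2) := by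
    have he := Real.add_one_le_exp ((c/2)*t^2)
    rw [show (1+4/c) = (c+4)/c by field_simp, div_mul_eq_mul_div, le_div_iff₀ hc]
    nlinarith [mul_le_mul_of_nonneg_left he (by linarith : (0:ℝ) ≤ c+4), sq_nonneg t,
      mul_nonneg hc.le (sq_nonneg t)]
  calc (1 + 2*t^2) * Real.exp (-c*t^2)
      ≤ ((1 + 4/c) * Real.exp ((c/2)*t^2)) * Real.exp (-c*t^2) :=
        mul_le_mul_of_nonneg_right h1 (Real.exp_pos _).le
    _ = (1 + 4/c) * Real.exp (-(c/2)*t^2) := by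
        rw [mul_assoc, ← Real.exp_add]; ring_nf

lemma bvnD_le {ρ₀ r : ℝ} (h1 : ρ₀ < 1) (hr : |r| ≤ ρ₀) (x y : ℝ) :
    |bvnD r x y| ≤ ((2*Real.pi*Real.sqrt (1 - ρ₀^2))⁻¹ * ((1-ρ₀^2)^2)⁻¹ * (1 + 4/((1-ρ₀)/2))^2) *
      (Real.exp (-((1-ρ₀)/2/2)*x^2) * Real.exp (-((1-ρ₀)/2/2)*y^2)) := by
  have h0 : 0 ≤ ρ₀ := le_trans (abs_nonneg r) hr
  have hr1 : |r| < 1 := lt_of_le_of_lt hr h1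
  have habs := abs_le.mp hr
  have hm : 0 < 1 - ρ₀^2 := by nlinarith
  have h2 : 0 < 1 - r^2 := one_sub_sq_pos hr1
  have hc : 0 < (1-ρ₀)/2 := by linarith
  have hbr : |((r*x - y)*(r*y - x) + r*(1 - r^2)) / (1 - r^2)^2| ≤
      (1+2*x^2)*(1+2*y^2)/(1-ρ₀^2)^2 := by
    rw [abs_div, abs_of_pos (by positivity : (0:ℝ) < (1-r^2)^2)]
    apply div_le_div₀ (by positivity) ?_ (by positivity) (pow_le_pow_left₀ hm.le (by nlinarith [mul_self_le_mul_self (abs_nonneg r) hr, sq_abs r]) 2)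
    have e1 : |r*x - y| ≤ |x|+|y| := by
      calc |r*x - y| ≤ |r*x| + |y| := abs_sub (r*x) y
        _ = |r| * |x| + |y| := by rw [abs_mul]
        _ ≤ |x| + |y| := by nlinarith [abs_nonneg x, abs_nonneg r, abs_lt.mp hr1]
    have e2 : |r*y - x| ≤ |y|+|x| := by
      calc |r*y - x| ≤ |r*y| + |x| := abs_sub (r*y) x
        _ = |r| * |y| + |x| := by rw [abs_mul]
        _ ≤ |y| + |x| := by nlinarith [abs_nonneg y, abs_nonneg r, abs_lt.mp hr1]
    have e3 : |r*(1-r^2)| ≤ 1 := by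
      rw [abs_mul, abs_of_pos h2]
      nlinarith [abs_nonneg r, sq_abs r, abs_lt.mp hr1]
    calc |(r*x - y)*(r*y - x) + r*(1 - r^2)| ≤ |(r*x - y)*(r*y - x)| + |r*(1-r^2)| := abs_add_le _ _
      _ = |r*x - y| * |r*y - x| + |r*(1-r^2)| := by rw [abs_mul]
      _ ≤ (|x|+|y|)*(|y|+|x|) + 1 := by
          have := mul_le_mul e1 e2 (abs_nonneg _) (by positivity)
          linarith
      _ ≤ (1+2*x^2)*(1+2*y^2) := by
          nlinarith [sq_abs x, sq_abs y, abs_nonneg x, abs_nonneg y, sq_nonneg (|x|-|y|),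
            mul_nonneg (mul_nonneg (abs_nonneg x) (abs_nonneg x)) (mul_nonneg (abs_nonneg y) (abs_nonneg y))]
  calc |bvnD r x y| = bvnPdf r x y * |((r*x - y)*(r*y - x) + r*(1 - r^2)) / (1 - r^2)^2| := by
        rw [bvnD, abs_mul, abs_of_pos (bvnPdf_pos hr1 x y)]
    _ ≤ ((2*Real.pi*Real.sqrt (1 - ρ₀^2))⁻¹ *
          (Real.exp (-((1-ρ₀)/2)*x^2) * Real.exp (-((1-ρ₀)/2)*y^2))) *
          ((1+2*x^2)*(1+2*y^2)/(1-ρ₀^2)^2) :=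
        mul_le_mul (bvnPdf_le h1 hr x y) hbr (abs_nonneg _) (by positivity)
    _ = ((2*Real.pi*Real.sqrt (1 - ρ₀^2))⁻¹ * ((1-ρ₀^2)^2)⁻¹) *
          (((1+2*x^2) * Real.exp (-((1-ρ₀)/2)*x^2)) * ((1+2*y^2) * Real.exp (-((1-ρ₀)/2)*y^2))) := by
        ring
    _ ≤ ((2*Real.pi*Real.sqrt (1 - ρ₀^2))⁻¹ * ((1-ρ₀^2)^2)⁻¹) *
          (((1 + 4/((1-ρ₀)/2)) * Real.exp (-((1-ρ₀)/2/2)*x^2)) *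
           ((1 + 4/((1-ρ₀)/2)) * Real.exp (-((1-ρ₀)/2/2)*y^2))) := by
        apply mul_le_mul_of_nonneg_left _ (by positivity)
        exact mul_le_mul (poly_absorb hc x) (poly_absorb hc y) (by positivity) (by positivity)
    _ = ((2*Real.pi*Real.sqrt (1 - ρ₀^2))⁻¹ * ((1-ρ₀^2)^2)⁻¹ * (1 + 4/((1-ρ₀)/2))^2) *
          (Real.exp (-((1-ρ₀)/2/2)*x^2) * Real.exp (-((1-ρ₀)/2/2)*y^2)) := by ring

lemma bvnK_le {ρ₀ r : ℝ} (h1 : ρ₀ < 1) (hr : |r| ≤ ρ₀) (x y A B : ℝ) :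
    |bvnPdf r x y * ((A*x + B*y)/(1 - r^2))| ≤
      ((2*Real.pi*Real.sqrt (1 - ρ₀^2))⁻¹ * (1-ρ₀^2)⁻¹ * ((|A|+|B|) * (1 + 4/((1-ρ₀)/2))^2)) *
      (Real.exp (-((1-ρ₀)/2/2)*x^2) * Real.exp (-((1-ρ₀)/2/2)*y^2)) := by
  have h0 : 0 ≤ ρ₀ := le_trans (abs_nonneg r) hr
  have hr1 : |r| < 1 := lt_of_le_of_lt hr h1
  have hm : 0 < 1 - ρ₀^2 := by nlinarith
  have h2 : 0 < 1 - r^2 := one_sub_sq_pos hr1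
  have hc : 0 < (1-ρ₀)/2 := by linarith
  have hu : |x| ≤ 1+2*x^2 := by nlinarith [sq_abs x, sq_nonneg (|x|-1), abs_nonneg x]
  have hv : |y| ≤ 1+2*y^2 := by nlinarith [sq_abs y, sq_nonneg (|y|-1), abs_nonneg y]
  have hlin : |(A*x + B*y)/(1 - r^2)| ≤ (|A|+|B|)*((1+2*x^2)*(1+2*y^2))/(1-ρ₀^2) := by
    rw [abs_div, abs_of_pos h2]
    apply div_le_div₀ ?_ ?_ (by positivity) (by nlinarith [mul_self_le_mul_self (abs_nonneg r) hr, sq_abs r])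
    · positivity
    calc |A*x + B*y| ≤ |A| * |x| + |B| * |y| := by
          calc |A*x + B*y| ≤ |A*x| + |B*y| := abs_add_le _ _
            _ = |A| * |x| + |B| * |y| := by rw [abs_mul, abs_mul]
      _ ≤ (|A|+|B|)*((1+2*x^2)*(1+2*y^2)) := by
          nlinarith [abs_nonneg A, abs_nonneg B, sq_nonneg x, sq_nonneg y,
            mul_nonneg (mul_nonneg (abs_nonneg A) (sq_nonneg x)) (sq_nonneg y),
            mul_nonneg (mul_nonneg (abs_nonneg B) (sq_nonneg x)) (sq_nonneg y),
            mul_nonneg (abs_nonneg A) (sq_nonneg y), mul_nonneg (abs_nonneg B) (sq_nonneg x),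
            mul_le_mul_of_nonneg_left hu (abs_nonneg A), mul_le_mul_of_nonneg_left hv (abs_nonneg B)]
  calc |bvnPdf r x y * ((A*x + B*y)/(1 - r^2))|
      = bvnPdf r x y * |(A*x + B*y)/(1 - r^2)| := by
        rw [abs_mul, abs_of_pos (bvnPdf_pos hr1 x y)]
    _ ≤ ((2*Real.pi*Real.sqrt (1 - ρ₀^2))⁻¹ *
          (Real.exp (-((1-ρ₀)/2)*x^2) * Real.exp (-((1-ρ₀)/2)*y^2))) *
          ((|A|+|B|)*((1+2*x^2)*(1+2*y^2))/(1-ρ₀^2)) :=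
        mul_le_mul (bvnPdf_le h1 hr x y) hlin (abs_nonneg _) (by positivity)
    _ = ((2*Real.pi*Real.sqrt (1 - ρ₀^2))⁻¹ * (1-ρ₀^2)⁻¹ * (|A|+|B|)) *
          (((1+2*x^2) * Real.exp (-((1-ρ₀)/2)*x^2)) * ((1+2*y^2) * Real.exp (-((1-ρ₀)/2)*y^2))) := by
        ring
    _ ≤ ((2*Real.pi*Real.sqrt (1 - ρ₀^2))⁻¹ * (1-ρ₀^2)⁻¹ * (|A|+|B|)) *
          (((1 + 4/((1-ρ₀)/2)) * Real.exp (-((1-ρ₀)/2/2)*x^2)) *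
           ((1 + 4/((1-ρ₀)/2)) * Real.exp (-((1-ρ₀)/2/2)*y^2))) := by
        apply mul_le_mul_of_nonneg_left _ (by positivity)
        exact mul_le_mul (poly_absorb hc x) (poly_absorb hc y) (by positivity) (by positivity)
    _ = ((2*Real.pi*Real.sqrt (1 - ρ₀^2))⁻¹ * (1-ρ₀^2)⁻¹ * ((|A|+|B|) * (1 + 4/((1-ρ₀)/2))^2)) *
      (Real.exp (-((1-ρ₀)/2/2)*x^2) * Real.exp (-((1-ρ₀)/2/2)*y^2)) := by ring

lemma integ1 {c : ℝ} (hc : 0 < c) (C : ℝ) :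
    Integrable (fun t : ℝ => C * Real.exp (-(c*t^2))) := by
  have := integrable_exp_neg_mul_sq hc
  simp only [neg_mul] at this
  exact this.const_mul C

lemma integ2 {c : ℝ} (hc : 0 < c) (C : ℝ) :
    Integrable (fun p : ℝ×ℝ => C * (Real.exp (-(c*p.1^2)) * Real.exp (-(c*p.2^2)))) := by
  have h1 : Integrable (fun t : ℝ => Real.exp (-(c*t^2))) := by
    have := integrable_exp_neg_mul_sq hc
    simpa only [neg_mul] using this
  have h2 := h1.mul_prod h1
  rw [Measure.volume_eq_prod]
  exact h2.const_mul C

lemma tendsto_exp_neg_sq {c : ℝ} (hc : 0 < c) (C : ℝ) :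
    Tendsto (fun t : ℝ => C * Real.exp (-(c*t^2))) atBot (𝓝 0) := by
  have h1 : Tendsto (fun t : ℝ => t^2) atBot atTop := by
    have h0 := (tendsto_pow_atTop (n := 2) (two_ne_zero)).comp tendsto_neg_atBot_atTop (α := ℝ)
    exact h0.congr fun t => by simp
  have h2 : Tendsto (fun t : ℝ => c * t^2) atBot atTop := h1.const_mul_atTop hc
  have h3 : Tendsto (fun t : ℝ => -(c * t^2)) atBot atBot := tendsto_neg_atTop_atBot.comp h2
  have h4 : Tendsto (fun t : ℝ => Real.exp (-(c*t^2))) atBot (𝓝 0) :=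
    Real.tendsto_exp_atBot.comp h3
  simpa using h4.const_mul C

lemma cont_pdf (r : ℝ) : Continuous fun p : ℝ×ℝ => bvnPdf r p.1 p.2 := by
  unfold bvnPdf
  apply Continuous.div_const
  apply Real.continuous_exp.comp
  apply Continuous.div_const
  fun_prop

lemma cont_D (r : ℝ) : Continuous fun p : ℝ×ℝ => bvnD r p.1 p.2 := by
  unfold bvnD
  exact (cont_pdf r).mul (by apply Continuous.div_const; fun_prop)

lemma hasDerivAt_bvn (a b ρ : ℝ) (hρ : ρ ∈ Set.Ioo (-1:ℝ) 1) :
    HasDerivAt (fun r => bvn a b r) (bvnPdf ρ a b) ρ := by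
  obtain ⟨hρ1, hρ2⟩ := hρ
  have hρa : |ρ| < 1 := abs_lt.2 ⟨hρ1, hρ2⟩
  set ρ₀ : ℝ := (1+|ρ|)/2 with hρ₀def
  have h1 : ρ₀ < 1 := by rw [hρ₀def]; linarith
  have hρle : |ρ| ≤ ρ₀ := by rw [hρ₀def]; linarith
  have h0 : 0 ≤ ρ₀ := le_trans (abs_nonneg ρ) hρle
  have hm : 0 < 1 - ρ₀^2 := by nlinarith
  have hc : 0 < (1-ρ₀)/2 := by linarith
  have hc4 : 0 < (1-ρ₀)/2/2 := by linarith
  set ε : ℝ := (1-|ρ|)/2 with hεdef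
  have hε : 0 < ε := by rw [hεdef]; linarith
  have hball : ∀ r ∈ Metric.ball ρ ε, |r| ≤ ρ₀ := by
    intro r hr
    rw [Metric.mem_ball, Real.dist_eq] at hr
    calc |r| = |(r-ρ)+ρ| := by ring_nf
      _ ≤ |r-ρ| + |ρ| := abs_add_le _ _
      _ ≤ ρ₀ := by rw [hρ₀def]; rw [hεdef] at hr; linarith [abs_nonneg (r-ρ)]
  set μ : Measure (ℝ×ℝ) := volume.restrict (s := Set.Iic a ×ˢ Set.Iic b) with hμdef
  set CD : ℝ := (2*Real.pi*Real.sqrt (1 - ρ₀^2))⁻¹ * ((1-ρ₀^2)^2)⁻¹ * (1 + 4/((1-ρ₀)/2))^2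
    with hCDdef
  have H := hasDerivAt_integral_of_dominated_loc_of_deriv_le (μ := μ)
    (F := fun r (p : ℝ×ℝ) => bvnPdf r p.1 p.2) (F' := fun r (p : ℝ×ℝ) => bvnD r p.1 p.2)
    (x₀ := ρ)
    (bound := fun p : ℝ×ℝ => CD * (Real.exp (-((1-ρ₀)/2/2)*p.1^2) * Real.exp (-((1-ρ₀)/2/2)*p.2^2)))
    (Metric.ball_mem_nhds ρ hε)
    (Filter.Eventually.of_forall fun r => ((cont_pdf r).aestronglyMeasurable).restrict)
    (by
      apply Integrable.mono' (((integ2 hc ((2*Real.pi*Real.sqrt (1 - ρ₀^2))⁻¹)).restrict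
        (s := Set.Iic a ×ˢ Set.Iic b)))
        ((cont_pdf ρ).aestronglyMeasurable.restrict)
      apply Filter.Eventually.of_forall
      intro p
      rw [Real.norm_eq_abs, abs_of_pos (bvnPdf_pos hρa p.1 p.2)]
      have := bvnPdf_le h1 hρle p.1 p.2
      calc bvnPdf ρ p.1 p.2 ≤ (2*Real.pi*Real.sqrt (1 - ρ₀^2))⁻¹ *
            (Real.exp (-((1-ρ₀)/2)*p.1^2) * Real.exp (-((1-ρ₀)/2)*p.2^2)) := this
        _ = (2*Real.pi*Real.sqrt (1 - ρ₀^2))⁻¹ *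
            (Real.exp (-((1-ρ₀)/2*p.1^2)) * Real.exp (-((1-ρ₀)/2*p.2^2))) := by ring_nf)
    ((cont_D ρ).aestronglyMeasurable.restrict)
    (by
      apply Filter.Eventually.of_forall
      intro p r hrb
      rw [Real.norm_eq_abs]
      have := bvnD_le h1 (hball r hrb) p.1 p.2
      calc |bvnD r p.1 p.2| ≤ CD * (Real.exp (-((1-ρ₀)/2/2)*p.1^2) *
          Real.exp (-((1-ρ₀)/2/2)*p.2^2)) := this
        _ = CD * (Real.exp (-((1-ρ₀)/2/2)*p.1^2) * Real.exp (-((1-ρ₀)/2/2)*p.2^2)) := rfl)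
    (by
      have := (integ2 hc4 CD).restrict (s := Set.Iic a ×ˢ Set.Iic b)
      apply this.congr
      apply Filter.Eventually.of_forall
      intro p
      ring_nf)
    (Filter.Eventually.of_forall fun p r hrb =>
      hasDerivAt_bvnPdf_rho (lt_of_le_of_lt (hball r hrb) h1) p.1 p.2)
  obtain ⟨hDint, hder⟩ := H
  -- now compute the value of the integral of bvnD
  have hval : (∫ p, bvnD ρ p.1 p.2 ∂μ) = bvnPdf ρ a b := by
    rw [hμdef]
    have hint : IntegrableOn (fun p : ℝ×ℝ => bvnD ρ p.1 p.2) (Set.Iic a ×ˢ Set.Iic b)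
      (volume.prod volume) := by
      rw [← Measure.volume_eq_prod]; exact hDint
    have hfub : (∫ p : ℝ×ℝ in Set.Iic a ×ˢ Set.Iic b, bvnD ρ p.1 p.2) =
        ∫ x in Set.Iic a, ∫ y in Set.Iic b, bvnD ρ x y := by
      rw [Measure.volume_eq_prod, setIntegral_prod _ hint]
    have inner : ∀ x : ℝ, (∫ y in Set.Iic b, bvnD ρ x y) =
        bvnPdf ρ x b * ((ρ*b - x)/(1 - ρ^2)) := by
      intro x
      have hDint1 : IntegrableOn (fun y => bvnD ρ x y) (Set.Iic b) := by
        apply Integrable.mono' ((integ1 hc4 (CD * Real.exp (-((1-ρ₀)/2/2)*x^2)))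
          |>.restrict (s := Set.Iic b))
        · exact ((cont_D ρ).comp (continuous_const.prodMk continuous_id)).aestronglyMeasurable
            |>.restrict
        · apply Filter.Eventually.of_forall
          intro t
          rw [Real.norm_eq_abs]
          calc |bvnD ρ x t| ≤ CD * (Real.exp (-((1-ρ₀)/2/2)*x^2) *
              Real.exp (-((1-ρ₀)/2/2)*t^2)) := bvnD_le h1 hρle x t
            _ = CD * Real.exp (-((1-ρ₀)/2/2)*x^2) * Real.exp (-((1-ρ₀)/2/2*t^2)) := by ring_nf
      have hTend : Tendsto (fun t => bvnPdf ρ x t * ((ρ*t - x)/(1 - ρ^2))) atBot (𝓝 0) := by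
        apply squeeze_zero_norm (a := fun t =>
          ((2*Real.pi*Real.sqrt (1 - ρ₀^2))⁻¹ * (1-ρ₀^2)⁻¹ * ((|(-1:ℝ)|+|ρ|) * (1 + 4/((1-ρ₀)/2))^2)
            * Real.exp (-((1-ρ₀)/2/2)*x^2)) * Real.exp (-((1-ρ₀)/2/2*t^2)))
        · intro t
          rw [Real.norm_eq_abs, show ρ*t - x = (-1)*x + ρ*t by ring]
          calc |bvnPdf ρ x t * (((-1)*x + ρ*t)/(1 - ρ^2))| ≤
              ((2*Real.pi*Real.sqrt (1 - ρ₀^2))⁻¹ * (1-ρ₀^2)⁻¹ *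
                ((|(-1:ℝ)|+|ρ|) * (1 + 4/((1-ρ₀)/2))^2)) *
              (Real.exp (-((1-ρ₀)/2/2)*x^2) * Real.exp (-((1-ρ₀)/2/2)*t^2)) :=
                bvnK_le h1 hρle x t (-1) ρ
            _ = ((2*Real.pi*Real.sqrt (1 - ρ₀^2))⁻¹ * (1-ρ₀^2)⁻¹ *
                ((|(-1:ℝ)|+|ρ|) * (1 + 4/((1-ρ₀)/2))^2) * Real.exp (-((1-ρ₀)/2/2)*x^2)) *
                Real.exp (-((1-ρ₀)/2/2*t^2)) := by ring_nf
        · exact tendsto_exp_neg_sq hc4 _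
      have := integral_Iic_of_hasDerivAt_of_tendsto'
        (f := fun t => bvnPdf ρ x t * ((ρ*t - x)/(1 - ρ^2))) (f' := fun t => bvnD ρ x t)
        (fun t _ => hasDerivAt_K_y hρa x t) hDint1 hTend
      simpa using this
    have outer : (∫ x in Set.Iic a, bvnPdf ρ x b * ((ρ*b - x)/(1 - ρ^2))) = bvnPdf ρ a b := by
      have hKint : IntegrableOn (fun x => bvnPdf ρ x b * ((ρ*b - x)/(1 - ρ^2))) (Set.Iic a) := by
        apply Integrable.mono' ((integ1 hc4
          ((2*Real.pi*Real.sqrt (1 - ρ₀^2))⁻¹ * (1-ρ₀^2)⁻¹ * ((|(-1:ℝ)|+|ρ|) *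
            (1 + 4/((1-ρ₀)/2))^2) * Real.exp (-((1-ρ₀)/2/2)*b^2))).restrict (s := Set.Iic a))
        · apply Continuous.aestronglyMeasurable ?_ |>.restrict
          exact ((cont_pdf ρ).comp (continuous_id.prodMk continuous_const)).mul
            (by apply Continuous.div_const; fun_prop)
        · apply Filter.Eventually.of_forall
          intro t
          rw [Real.norm_eq_abs, show ρ*b - t = (-1)*t + ρ*b by ring]
          calc |bvnPdf ρ t b * (((-1)*t + ρ*b)/(1 - ρ^2))| ≤
              ((2*Real.pi*Real.sqrt (1 - ρ₀^2))⁻¹ * (1-ρ₀^2)⁻¹ *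
                ((|(-1:ℝ)|+|ρ|) * (1 + 4/((1-ρ₀)/2))^2)) *
              (Real.exp (-((1-ρ₀)/2/2)*t^2) * Real.exp (-((1-ρ₀)/2/2)*b^2)) :=
                bvnK_le h1 hρle t b (-1) ρ
            _ = ((2*Real.pi*Real.sqrt (1 - ρ₀^2))⁻¹ * (1-ρ₀^2)⁻¹ * ((|(-1:ℝ)|+|ρ|) *
                (1 + 4/((1-ρ₀)/2))^2) * Real.exp (-((1-ρ₀)/2/2)*b^2)) *
                Real.exp (-((1-ρ₀)/2/2*t^2)) := by ring_nf
      have hTend2 : Tendsto (fun x => bvnPdf ρ x b) atBot (𝓝 0) := by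
        apply squeeze_zero_norm (a := fun t =>
          ((2*Real.pi*Real.sqrt (1 - ρ₀^2))⁻¹ * Real.exp (-((1-ρ₀)/2)*b^2)) *
            Real.exp (-((1-ρ₀)/2*t^2)))
        · intro t
          rw [Real.norm_eq_abs, abs_of_pos (bvnPdf_pos hρa t b)]
          calc bvnPdf ρ t b ≤ (2*Real.pi*Real.sqrt (1 - ρ₀^2))⁻¹ *
              (Real.exp (-((1-ρ₀)/2)*t^2) * Real.exp (-((1-ρ₀)/2)*b^2)) := bvnPdf_le h1 hρle t b
            _ = ((2*Real.pi*Real.sqrt (1 - ρ₀^2))⁻¹ * Real.exp (-((1-ρ₀)/2)*b^2)) *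
                Real.exp (-((1-ρ₀)/2*t^2)) := by ring_nf
        · exact tendsto_exp_neg_sq hc _
      have := integral_Iic_of_hasDerivAt_of_tendsto'
        (f := fun x => bvnPdf ρ x b) (f' := fun x => bvnPdf ρ x b * ((ρ*b - x)/(1 - ρ^2)))
        (fun x _ => hasDerivAt_bvnPdf_x hρa x b) hKint hTend2
      simpa using this
    calc (∫ p : ℝ×ℝ in Set.Iic a ×ˢ Set.Iic b, bvnD ρ p.1 p.2) =
        ∫ x in Set.Iic a, ∫ y in Set.Iic b, bvnD ρ x y := hfub
      _ = ∫ x in Set.Iic a, bvnPdf ρ x b * ((ρ*b - x)/(1 - ρ^2)) :=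
          integral_congr_ae (Filter.Eventually.of_forall inner)
      _ = bvnPdf ρ a b := outer
  rw [hval] at hder
  exact hder


theorem stmt_19 (a b : ℝ) :
    MonotoneOn (fun ρ => bvn a b ρ) (Set.Ioo (-1 : ℝ) 1) ∧
    ∀ ρ ∈ Set.Ioo (-1 : ℝ) 1, HasDerivAt (fun r => bvn a b r) (bvnPdf ρ a b) ρ := by
  have hder : ∀ ρ ∈ Set.Ioo (-1 : ℝ) 1, HasDerivAt (fun r => bvn a b r) (bvnPdf ρ a b) ρ :=
    fun ρ hρ => hasDerivAt_bvn a b ρ hρ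
  constructor
  · apply StrictMonoOn.monotoneOn
    apply strictMonoOn_of_deriv_pos (convex_Ioo _ _)
    · exact fun x hx => (hder x hx).continuousAt.continuousWithinAt
    · intro x hx
      rw [interior_Ioo] at hx
      rw [(hder x hx).deriv]
      exact bvnPdf_pos (abs_lt.2 ⟨hx.1, hx.2⟩) a b
  · exact hder
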